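/- Let f, g ∈ K[X₁,…,X_n] where g is unidimensional of direction δ and let f = f₁ + ⋯ + f_s be the decomposition of f into its δ-components. Then the multiplicity of g as a factor of f equals the minimum over t of the multiplicity of g as a factor of f_t: mult_g(f) = min_{1≤t≤s} mult_g(f_t). -/

import Mathlib

variable {K : Type*} {n : ℕ}

/-- A polynomial is unidimensional of direction `δ ∈ ℤⁿ` if it has at least two
monomials and the difference of the exponent vectors of any two of its monomials is
an integer multiple of `δ`. -/
def Unidimensional [CommSemiring K] (δ : Fin n → ℤ) (f : MvPolynomial (Fin n) K) :
    Prop :=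
  2 ≤ f.support.card ∧ ∀ a ∈ f.support, ∀ b ∈ f.support,
    ∃ l : ℤ, ∀ i, (a i : ℤ) - (b i : ℤ) = l * δ i

/-- The multiplicity of `g` as a factor of `f`, i.e. the largest `μ` with `g ^ μ ∣ f`. -/
noncomputable def multOf {R : Type*} [CommRing R] (g f : R) : ℕ :=
  sSup {μ : ℕ | g ^ μ ∣ f}

open Classical in
/-- The restriction of a polynomial to the exponents lying on the line through `v`
with direction `δ`. -/
noncomputable def sliceP [CommSemiring K] (δ v : Fin n → ℤ)
    (p : MvPolynomial (Fin n) K) : MvPolynomial (Fin n) K :=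
  AddMonoidAlgebra.ofCoeff
    (Finsupp.filter (fun e : Fin n →₀ ℕ => ∃ l : ℤ, ∀ i, (e i : ℤ) - v i = l * δ i) (AddMonoidAlgebra.coeff p))

lemma coeff_sliceP_pos [CommSemiring K] {δ v : Fin n → ℤ} (p : MvPolynomial (Fin n) K)
    {e : Fin n →₀ ℕ} (he : ∃ l : ℤ, ∀ i, (e i : ℤ) - v i = l * δ i) :
    (sliceP δ v p).coeff e = p.coeff e := by
  classical exact Finsupp.filter_apply_pos (M := K) _ _ he

lemma coeff_sliceP_neg [CommSemiring K] {δ v : Fin n → ℤ} (p : MvPolynomial (Fin n) K)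
    {e : Fin n →₀ ℕ} (he : ¬ ∃ l : ℤ, ∀ i, (e i : ℤ) - v i = l * δ i) :
    (sliceP δ v p).coeff e = 0 := by
  classical exact Finsupp.filter_apply_neg (M := K) _ _ he

lemma sliceP_mul [Field K] (δ : Fin n → ℤ) (g : MvPolynomial (Fin n) K)
    (a₀ : Fin n →₀ ℕ) (ha₀ : a₀ ∈ g.support)
    (hg : ∀ a ∈ g.support, ∀ b ∈ g.support,
      ∃ l : ℤ, ∀ i, (a i : ℤ) - (b i : ℤ) = l * δ i)
    (v : Fin n → ℤ) (h : MvPolynomial (Fin n) K) :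
    sliceP δ v (g * h) = g * sliceP δ (fun i => v i - (a₀ i : ℤ)) h := by
  ext e
  by_cases he : ∃ l : ℤ, ∀ i, (e i : ℤ) - v i = l * δ i
  · rw [coeff_sliceP_pos _ he, MvPolynomial.coeff_mul, MvPolynomial.coeff_mul]
    refine Finset.sum_congr rfl fun x hx => ?_
    by_cases hg1 : g.coeff x.1 = 0
    · simp [hg1]
    have hx1 : x.1 ∈ g.support := by
      simpa [MvPolynomial.mem_support_iff] using hg1
    obtain ⟨l1, hl1⟩ := hg x.1 hx1 a₀ ha₀
    obtain ⟨l0, hl0⟩ := he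
    have hxe : x.1 + x.2 = e := Finset.HasAntidiagonal.mem_antidiagonal.1 hx
    have hq : ∃ l : ℤ, ∀ i, (x.2 i : ℤ) - (v i - (a₀ i : ℤ)) = l * δ i := by
      refine ⟨l0 - l1, fun i => ?_⟩
      have hei : (e i : ℤ) = (x.1 i : ℤ) + (x.2 i : ℤ) := by
        rw [← hxe]; push_cast [Finsupp.add_apply]; ring
      nlinarith [hl0 i, hl1 i]
    rw [coeff_sliceP_pos _ hq]
  · rw [coeff_sliceP_neg _ he, MvPolynomial.coeff_mul]
    symm
    refine Finset.sum_eq_zero fun x hx => ?_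
    by_cases hg1 : g.coeff x.1 = 0
    · simp [hg1]
    have hx1 : x.1 ∈ g.support := by
      simpa [MvPolynomial.mem_support_iff] using hg1
    obtain ⟨l1, hl1⟩ := hg x.1 hx1 a₀ ha₀
    by_cases hq : ∃ l : ℤ, ∀ i, (x.2 i : ℤ) - (v i - (a₀ i : ℤ)) = l * δ i
    · exfalso
      obtain ⟨l, hl⟩ := hq
      refine he ⟨l + l1, fun i => ?_⟩
      have hxe : x.1 + x.2 = e := Finset.HasAntidiagonal.mem_antidiagonal.1 hx
      have hei : (e i : ℤ) = (x.1 i : ℤ) + (x.2 i : ℤ) := by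
        rw [← hxe]; push_cast [Finsupp.add_apply]; ring
      nlinarith [hl i, hl1 i]
    · rw [coeff_sliceP_neg _ hq, mul_zero]

lemma pow_dvd_sliceP [Field K] (δ : Fin n → ℤ) (g : MvPolynomial (Fin n) K)
    (a₀ : Fin n →₀ ℕ) (ha₀ : a₀ ∈ g.support)
    (hg : ∀ a ∈ g.support, ∀ b ∈ g.support,
      ∃ l : ℤ, ∀ i, (a i : ℤ) - (b i : ℤ) = l * δ i) :
    ∀ (μ : ℕ) (v : Fin n → ℤ) (h : MvPolynomial (Fin n) K),
      g ^ μ ∣ sliceP δ v (g ^ μ * h) := by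
  intro μ
  induction μ with
  | zero => intro v h; simp
  | succ μ ih =>
    intro v h
    have heq : g ^ (μ + 1) * h = g * (g ^ μ * h) := by ring
    rw [heq, sliceP_mul δ g a₀ ha₀ hg, pow_succ']
    exact mul_dvd_mul_left g (ih _ _)

/-- The unidimensional factors of direction `δ` of `f` are the common factors of its
`δ`-components: if `f = f₁ + ⋯ + f_s` is the decomposition of `f` into `δ`-components
(nonzero summands whose supports lie on lines of direction `δ`, maximal in the sense
that monomials of distinct components are not aligned along `δ`), then
`mult_g(f) = min_t mult_g(f_t)` for every unidimensional `g` of direction `δ`. -/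
theorem multOf_eq_min_components [Field K]
    (δ : Fin n → ℤ) (g f : MvPolynomial (Fin n) K)
    (hg : Unidimensional δ g)
    (s : ℕ) (hs : 0 < s) (F : Fin s → MvPolynomial (Fin n) K)
    (hF0 : ∀ t, F t ≠ 0)
    (hsum : f = ∑ t, F t)
    (hcomp : ∀ t, ∀ a ∈ (F t).support, ∀ b ∈ (F t).support,
      ∃ l : ℤ, ∀ i, (a i : ℤ) - (b i : ℤ) = l * δ i)
    (hmax : ∀ t t', t ≠ t' → ∀ a ∈ (F t).support, ∀ b ∈ (F t').support,
      ¬ ∃ l : ℤ, ∀ i, (a i : ℤ) - (b i : ℤ) = l * δ i) :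
    multOf g f = ⨅ t, multOf g (F t) := by
  classical
  have hne : Nonempty (Fin s) := ⟨⟨0, hs⟩⟩
  obtain ⟨a₀, ha₀⟩ : ∃ a, a ∈ g.support := by
    rcases Finset.card_pos.1 (lt_of_lt_of_le (by norm_num) hg.1) with ⟨a, ha⟩
    exact ⟨a, ha⟩
  have hx : ∀ t, ∃ x, x ∈ (F t).support := fun t =>
    MvPolynomial.support_nonempty.2 (hF0 t)
  choose x hxmem using hx
  -- each component is the corresponding slice of f
  have hslice : ∀ t, F t = sliceP δ (fun i => ((x t) i : ℤ)) f := by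
    intro t
    ext e
    have hcoe : f.coeff e = ∑ t', (F t').coeff e := by
      rw [hsum, MvPolynomial.coeff_sum]
    by_cases hrel : ∃ l : ℤ, ∀ i, (e i : ℤ) - ((x t) i : ℤ) = l * δ i
    · rw [coeff_sliceP_pos _ hrel, hcoe]
      by_cases het : e ∈ (F t).support
      · rw [Finset.sum_eq_single t]
        · intro t' _ hne'
          by_contra hc
          have het' : e ∈ (F t').support := MvPolynomial.mem_support_iff.2 hc
          exact hmax t' t hne' e het' (x t) (hxmem t) hrel
        · intro habs; exact absurd (Finset.mem_univ t) habs
      · have he0 : (F t).coeff e = 0 := by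
          simpa [MvPolynomial.mem_support_iff] using het
        rw [he0]
        symm
        refine Finset.sum_eq_zero fun t' _ => ?_
        by_contra hc
        have het' : e ∈ (F t').support := MvPolynomial.mem_support_iff.2 hc
        rcases eq_or_ne t' t with rfl | hne'
        · exact het het'
        · exact hmax t' t hne' e het' (x t) (hxmem t) hrel
    · rw [coeff_sliceP_neg _ hrel]
      by_contra hc
      have het : e ∈ (F t).support := MvPolynomial.mem_support_iff.2 hc
      exact hrel (hcomp t e het (x t) (hxmem t))
  -- the key divisibility equivalence
  have key : ∀ μ : ℕ, g ^ μ ∣ f ↔ ∀ t, g ^ μ ∣ F t := by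
    intro μ
    constructor
    · rintro ⟨h, hh⟩ t
      rw [hslice t, hh]
      exact pow_dvd_sliceP δ g a₀ ha₀ hg.2 μ _ h
    · intro h
      rw [hsum]
      exact Finset.dvd_sum fun t _ => h t
  by_cases hu : IsUnit g
  · -- degenerate case handled by junk values
    have hz : ∀ p : MvPolynomial (Fin n) K, multOf g p = 0 := by
      intro p
      have hU : {μ : ℕ | g ^ μ ∣ p} = Set.univ :=
        Set.eq_univ_of_forall fun μ => (hu.pow μ).dvd
      rw [multOf, hU]
      exact Set.Infinite.Nat.sSup_eq_zero Set.infinite_univ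
    rw [hz f]
    simp [hz]
  · have hfin : ∀ t, FiniteMultiplicity g (F t) := fun t =>
      FiniteMultiplicity.of_not_isUnit hu (hF0 t)
    have hf0 : f ≠ 0 := by
      intro h0
      apply hF0 ⟨0, hs⟩
      rw [hslice ⟨0, hs⟩, h0]
      ext e
      by_cases hrel : ∃ l : ℤ, ∀ i, (e i : ℤ) - ((x ⟨0, hs⟩) i : ℤ) = l * δ i
      · rw [coeff_sliceP_pos _ hrel]
      · rw [coeff_sliceP_neg _ hrel]; simp
    have hfinf : FiniteMultiplicity g f := FiniteMultiplicity.of_not_isUnit hu hf0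
    have hmo : ∀ {p : MvPolynomial (Fin n) K}, FiniteMultiplicity g p →
        multOf g p = multiplicity g p := by
      intro p hp
      have hI : {μ : ℕ | g ^ μ ∣ p} = Set.Iic (multiplicity g p) := by
        ext μ; exact hp.pow_dvd_iff_le_multiplicity
      rw [multOf, hI, csSup_Iic]
    rw [hmo hfinf]
    have hIinf : ⨅ t, multOf g (F t) = ⨅ t, multiplicity g (F t) :=
      iInf_congr fun t => hmo (hfin t)
    rw [hIinf]
    apply le_antisymm
    · exact le_ciInf fun t =>
        (hfin t).le_multiplicity_of_pow_dvd ((key _).1 (pow_multiplicity_dvd g f) t)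
    · refine hfinf.le_multiplicity_of_pow_dvd ((key _).2 fun t => ?_)
      exact (hfin t).pow_dvd_iff_le_multiplicity.2 (ciInf_le (OrderBot.bddBelow _) t)
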